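/- Let N, L be positive natural numbers, let D : Fin (L+1) → ℕ, let Ã, E_a : Matrix (Fin N) (Fin N) ℝ with Ã invertible, let Θ l : Matrix (Fin (D l)) (Fin (D (l+1))) ℝ, and let X̂ : Matrix (Fin N) (Fin (D 0)) ℝ. Define the denoised hidden states by H 0 = X̂ and H (l+1) = (Ã − E_a) * (H l) * Θ l, and take prompts P l = −(Ã⁻¹ * E_a * (H l)) for l = 0, …, L−1. Then the prompted network output on the corrupted topology, defined by Ĥ 0 = X̂ and Ĥ (l+1) = Ã * (Ĥ l + P l) * Θ l, satisfies Ĥ l = H l for every l ≤ L; in particular Ĥ L = H L. -/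
import Mathlib


/-- Topology-noise-only case of Theorem 1: with prompts
`P l = −(Ã⁻¹ * E_a * H l)` at every layer, the prompted `L`-layer linear GIN
on the corrupted propagation matrix `Ã` reproduces the network on the denoised
propagation matrix `Ã − E_a`, layer by layer. -/
theorem prompts_compensate_topology_noise
    (N L : ℕ) (hN : 0 < N) (hL : 0 < L)
    (D : Fin (L + 1) → ℕ)
    (Atil Ea : Matrix (Fin N) (Fin N) ℝ) (hinv : IsUnit Atil)
    (Θ : ∀ l : Fin L, Matrix (Fin (D l.castSucc)) (Fin (D l.succ)) ℝ)
    (Xhat : Matrix (Fin N) (Fin (D 0)) ℝ)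
    (H : ∀ l : Fin (L + 1), Matrix (Fin N) (Fin (D l)) ℝ)
    (hH0 : H 0 = Xhat)
    (hH : ∀ l : Fin L, H l.succ = (Atil - Ea) * H l.castSucc * Θ l)
    (P : ∀ l : Fin L, Matrix (Fin N) (Fin (D l.castSucc)) ℝ)
    (hP : ∀ l : Fin L, P l = -(Atil⁻¹ * Ea * H l.castSucc))
    (Hhat : ∀ l : Fin (L + 1), Matrix (Fin N) (Fin (D l)) ℝ)
    (hHhat0 : Hhat 0 = Xhat)
    (hHhat : ∀ l : Fin L, Hhat l.succ = Atil * (Hhat l.castSucc + P l) * Θ l) :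
    ∀ l : Fin (L + 1), Hhat l = H l := by
  have hA : Atil * Atil⁻¹ = 1 :=
    Matrix.mul_nonsing_inv _ ((Matrix.isUnit_iff_isUnit_det Atil).mp hinv)
  intro l
  induction l using Fin.induction with
  | zero => rw [hHhat0, hH0]
  | succ i ih =>
    rw [hHhat i, hH i, hP i, ih]
    congr 1
    rw [Matrix.mul_add, Matrix.mul_neg, ← Matrix.mul_assoc Atil, ← Matrix.mul_assoc,
      hA, Matrix.one_mul, Matrix.sub_mul, sub_eq_add_neg]
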